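/- Let φ : (-∞, 0] → ℝ be continuous, strictly decreasing, and bounded, and let J_* : ℝ → ℝ₊ be continuous, even, with support contained in [-K_*, K_*] and J_* > 0 on an open subinterval of (0, K_*). Then B := ∫_{-K_*}^0 ∫_0^{K_*} (r + ρ) φ(r) J_*(r - ρ) dρ dr < 0. -/
import Mathlib


open MeasureTheory intervalIntegral

/-- Let `φ : (-∞,0] → ℝ` be continuous, strictly decreasing and bounded, and `J_* : ℝ → ℝ₊`
continuous, even, supported in `[-K_*, K_*]` and positive on some open subinterval of
`(0, K_*)`. Then `B = ∫_{-K_*}^0 ∫_0^{K_*} (r+ρ) φ(r) J_*(r-ρ) dρ dr < 0`. -/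
theorem stmt11 (Kstar : ℝ) (hK : 0 < Kstar)
    (φ : ℝ → ℝ) (hφc : ContinuousOn φ (Set.Iic 0)) (hφanti : StrictAntiOn φ (Set.Iic 0))
    (hφb : ∃ M, ∀ x ≤ (0:ℝ), |φ x| ≤ M)
    (Jstar : ℝ → ℝ) (hJc : Continuous Jstar) (hJnn : ∀ x, 0 ≤ Jstar x)
    (hJeven : ∀ x, Jstar (-x) = Jstar x)
    (hJsupp : ∀ x, Kstar < |x| → Jstar x = 0)
    (hpos : ∃ a b : ℝ, 0 < a ∧ a < b ∧ b < Kstar ∧ ∀ x ∈ Set.Ioo a b, 0 < Jstar x) :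
    (∫ r in (-Kstar)..0, ∫ ρ in (0:ℝ)..Kstar, (r + ρ) * φ r * Jstar (r - ρ)) < 0 := by
  obtain ⟨a, b, ha, hab, hbK, hJab⟩ := hpos
  set s : Set ℝ := Set.Ioc 0 Kstar with hs
  set g : ℝ × ℝ → ℝ := fun p => (p.2 - p.1) * φ (-p.1) * Jstar (p.1 + p.2) with hg
  -- continuity of g on the closed square
  have hgc : ContinuousOn g (Set.Icc 0 Kstar ×ˢ Set.Icc 0 Kstar) := by
    apply ContinuousOn.mul
    · apply ContinuousOn.mul
      · exact (continuous_snd.sub continuous_fst).continuousOn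
      · refine hφc.comp (continuous_fst.neg).continuousOn ?_
        rintro ⟨r, ρ⟩ ⟨hr, _⟩
        simp only [Set.mem_Iic]
        linarith [hr.1]
    · exact (hJc.comp (continuous_fst.add continuous_snd)).continuousOn
  have hgsc : ContinuousOn (fun p : ℝ × ℝ => g p.swap)
      (Set.Icc 0 Kstar ×ˢ Set.Icc 0 Kstar) := by
    apply ContinuousOn.mul
    · apply ContinuousOn.mul
      · exact (continuous_fst.sub continuous_snd).continuousOn
      · refine hφc.comp (continuous_snd.neg).continuousOn ?_
        rintro ⟨r, ρ⟩ ⟨_, hρ⟩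
        simp only [Set.mem_Iic, Prod.swap_prod_mk]
        linarith [hρ.1]
    · exact (hJc.comp (continuous_snd.add continuous_fst)).continuousOn
  have hsubset : s ×ˢ s ⊆ Set.Icc 0 Kstar ×ˢ Set.Icc 0 Kstar :=
    Set.prod_mono Set.Ioc_subset_Icc_self Set.Ioc_subset_Icc_self
  have hgint : IntegrableOn g (s ×ˢ s) := by
    exact (hgc.integrableOn_compact (isCompact_Icc.prod isCompact_Icc)).mono_set hsubset
  have hgsint : IntegrableOn (fun p : ℝ × ℝ => g p.swap) (s ×ˢ s) := by
    exact (hgsc.integrableOn_compact (isCompact_Icc.prod isCompact_Icc)).mono_set hsubset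
  -- rewrite B as the integral of g over the square
  have hB : (∫ r in (-Kstar)..0, ∫ ρ in (0:ℝ)..Kstar, (r + ρ) * φ r * Jstar (r - ρ))
      = ∫ p in s ×ˢ s, g p := by
    have h1 := intervalIntegral.integral_comp_neg (a := 0) (b := Kstar)
      (fun r => ∫ ρ in (0:ℝ)..Kstar, (r + ρ) * φ r * Jstar (r - ρ))
    simp only [neg_zero] at h1
    rw [← h1]
    have h2 : ∀ r : ℝ, (∫ ρ in (0:ℝ)..Kstar, (-r + ρ) * φ (-r) * Jstar (-r - ρ))
        = ∫ ρ in s, g (r, ρ) := by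
      intro r
      rw [intervalIntegral.integral_of_le hK.le]
      refine setIntegral_congr_fun measurableSet_Ioc fun ρ _ => ?_
      have e1 : -r - ρ = -(r + ρ) := by ring
      rw [e1, hJeven]
      simp only [hg]
      ring
    rw [intervalIntegral.integral_of_le hK.le]
    calc (∫ r in s, ∫ ρ in (0:ℝ)..Kstar, (-r + ρ) * φ (-r) * Jstar (-r - ρ))
        = ∫ r in s, ∫ ρ in s, g (r, ρ) := by
          exact setIntegral_congr_fun measurableSet_Ioc fun r _ => h2 r
      _ = ∫ p : ℝ × ℝ in s ×ˢ s, g p := by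
          have hint : Integrable (Function.uncurry fun r ρ => g (r, ρ))
              ((volume.restrict s).prod (volume.restrict s)) := by
            rw [Measure.prod_restrict]
            have : (Function.uncurry fun r ρ => g (r, ρ)) = g := by
              funext p; simp [Function.uncurry]
            rw [this]
            rw [← Measure.volume_eq_prod]
            exact hgint
          rw [MeasureTheory.integral_integral hint, Measure.prod_restrict,
            ← Measure.volume_eq_prod]
  -- symmetry
  have hswap : (∫ p in s ×ˢ s, g p) = ∫ p in s ×ˢ s, g p.swap := by
    have := MeasureTheory.integral_prod_swap (μ := volume.restrict s)
      (ν := volume.restrict s) g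
    rw [Measure.prod_restrict, ← Measure.volume_eq_prod] at this
    exact this.symm
  have h2B : (∫ p in s ×ˢ s, g p) * 2
      = ∫ p in s ×ˢ s, (g p + g p.swap) := by
    rw [integral_add hgint hgsint, ← hswap]; ring
  -- the symmetrized integrand is nonpositive on the square
  have hnonpos : ∀ p ∈ s ×ˢ s, g p + g p.swap ≤ 0 := by
    rintro ⟨r, ρ⟩ ⟨hr, hρ⟩
    simp only [hg, Prod.swap_prod_mk]
    have hJ1 : 0 ≤ Jstar (r + ρ) := hJnn _
    have e : Jstar (ρ + r) = Jstar (r + ρ) := by rw [add_comm]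
    rw [e]
    rcases lt_trichotomy r ρ with h | h | h
    · have hφ' : φ (-r) < φ (-ρ) :=
        hφanti (by simp only [Set.mem_Iic]; linarith [hρ.1])
          (by simp only [Set.mem_Iic]; linarith [hr.1]) (by linarith)
      have key : (ρ - r) * (φ (-r) - φ (-ρ)) ≤ 0 :=
        mul_nonpos_iff.2 (Or.inl ⟨by linarith, by linarith⟩)
      nlinarith [mul_nonneg hJ1 (neg_nonneg.2 key)]
    · subst h; nlinarith [hJ1]
    · have hφ' : φ (-ρ) < φ (-r) :=
        hφanti (by simp only [Set.mem_Iic]; linarith [hr.1])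
          (by simp only [Set.mem_Iic]; linarith [hρ.1]) (by linarith)
      have key : (ρ - r) * (φ (-r) - φ (-ρ)) ≤ 0 :=
        mul_nonpos_iff.2 (Or.inr ⟨by linarith, by linarith⟩)
      nlinarith [mul_nonneg hJ1 (neg_nonneg.2 key)]
  -- an open set where the symmetrized integrand is strictly negative
  set c : ℝ := (a + b) / 2 with hc
  have hc0 : 0 < c := by simp only [hc]; linarith
  have hac : a < c := by simp only [hc]; linarith
  have hcb : c < b := by simp only [hc]; linarith
  have hcK : c < Kstar := lt_trans hcb hbK
  set U : Set (ℝ × ℝ) := ((Set.Ioo (c/2) Kstar) ×ˢ (Set.Ioo 0 (c/2)))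
      ∩ ((fun p : ℝ × ℝ => p.1 + p.2) ⁻¹' Set.Ioo a b) with hU
  have hUopen : IsOpen U :=
    (isOpen_Ioo.prod isOpen_Ioo).inter (isOpen_Ioo.preimage (continuous_fst.add continuous_snd))
  have hUne : U.Nonempty := by
    refine ⟨(3*c/4, c/4), ⟨⟨?_, ?_⟩, ?_⟩⟩ <;>
      simp only [Set.mem_Ioo, Set.mem_preimage] <;> constructor <;> linarith
  have hUsub : U ⊆ s ×ˢ s := by
    rintro ⟨r, ρ⟩ ⟨⟨hr, hρ⟩, _⟩
    exact ⟨⟨by linarith [hr.1], hr.2.le⟩, ⟨hρ.1, by linarith [hρ.2]⟩⟩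
  have hUneg : ∀ p ∈ U, g p + g p.swap < 0 := by
    rintro ⟨r, ρ⟩ ⟨⟨hr, hρ⟩, hsum⟩
    simp only [Set.mem_preimage, Set.mem_Ioo] at hsum
    simp only [hg, Prod.swap_prod_mk]
    have hJ1 : 0 < Jstar (r + ρ) := hJab _ hsum
    have e : Jstar (ρ + r) = Jstar (r + ρ) := by rw [add_comm]
    rw [e]
    have hrρ : ρ < r := lt_trans hρ.2 hr.1
    have hφ' : φ (-ρ) < φ (-r) :=
      hφanti (by simp only [Set.mem_Iic]; linarith [hr.1, hc0])
        (by simp only [Set.mem_Iic]; linarith [hρ.1]) (by linarith)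
    have key : (ρ - r) * (φ (-r) - φ (-ρ)) < 0 :=
      mul_neg_of_neg_of_pos (by linarith) (by linarith)
    nlinarith [mul_pos hJ1 (neg_pos.2 key)]
  -- conclude
  have hmeas : MeasurableSet (s ×ˢ s) := measurableSet_Ioc.prod measurableSet_Ioc
  have hipos : 0 < ∫ p in s ×ˢ s, -(g p + g p.swap) := by
    rw [setIntegral_pos_iff_support_of_nonneg_ae]
    · refine lt_of_lt_of_le (hUopen.measure_pos volume hUne) (measure_mono ?_)
      intro p hp
      refine ⟨?_, hUsub hp⟩
      have := hUneg p hp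
      simp only [Function.mem_support]
      intro h0
      rw [neg_eq_zero] at h0
      linarith [this, h0.ge]
    · refine (ae_restrict_iff' hmeas).2 (Filter.Eventually.of_forall fun p hp => ?_)
      have := hnonpos p hp
      simp only [Pi.zero_apply]
      linarith
    · exact (hgint.add hgsint).neg
  have hineg : (∫ p in s ×ˢ s, (g p + g p.swap)) < 0 := by
    rw [MeasureTheory.integral_neg] at hipos
    linarith
  rw [hB]
  linarith [h2B, hineg]
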